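/- For any real θ, (1/9)·∑_{ℓ=0}^{8} (sin((θ+ℓπ)/9))^{20} = (1/4^{10})·[C(20,10) − 2·C(20,1)·cos(2θ)]. -/

import Mathlib

open Real Finset


open Real Finset

noncomputable abbrev cc (m : ℕ) : ℂ := (-1)^m * (Nat.choose 20 m : ℂ)

lemma sin_pow20 (x : ℝ) : (Complex.sin x) ^ 20
    = (∑ m ∈ Finset.range 21,
        cc m * Complex.exp (((20:ℂ) - 2*m) * x * Complex.I)) / 4 ^ 10 := by
  have h2 : Complex.sin x = (Complex.exp (-x * Complex.I) - Complex.exp (x * Complex.I)) * Complex.I / 2 := by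
    have := Complex.two_sin (x : ℂ)
    field_simp
    ring_nf
    ring_nf at this
    simp only [mul_comm Complex.I] at this ⊢
    linear_combination this
  rw [h2, div_pow, mul_pow, sub_pow]
  have hI : (Complex.I : ℂ) ^ 20 = 1 := by
    rw [show (20:ℕ) = 2*10 from rfl, pow_mul, Complex.I_sq]; norm_num
  rw [hI, mul_one]
  norm_num
  apply Finset.sum_congr rfl
  intro m hm
  rw [Finset.mem_range] at hm
  have hm' : m ≤ 20 := by omega
  rw [← Complex.exp_nat_mul, ← Complex.exp_nat_mul]
  have hmerge : Complex.exp ((m:ℂ) * -(↑x * Complex.I)) * Complex.exp (((20 - m : ℕ):ℂ) * (↑x * Complex.I))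
      = Complex.exp (((20:ℂ) - 2*m) * ↑x * Complex.I) := by
    rw [← Complex.exp_add]
    congr 1
    push_cast [hm']
    ring
  simp only [cc]
  linear_combination ((-1:ℂ)^(m+20) * (Nat.choose 20 m : ℂ)) * hmerge

open Real Finset

noncomputable abbrev zz (m : ℕ) : ℂ := Complex.exp (((20:ℂ) - 2*m) * (Real.pi/9) * Complex.I)

lemma zz_pow9 (m : ℕ) : zz m ^ 9 = 1 := by
  rw [zz, ← Complex.exp_nat_mul]
  have : (((9:ℕ)):ℂ) * (((20:ℂ) - 2*m) * (↑Real.pi/9) * Complex.I) = ((10 - (m:ℤ) : ℤ):ℂ) * (2 * Real.pi * Complex.I) := by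
    push_cast; ring
  rw [this, Complex.exp_int_mul_two_pi_mul_I]

lemma zz_ne_one (m : ℕ) (hm : m < 21) (h1 : m ≠ 1) (h10 : m ≠ 10) (h19 : m ≠ 19) : zz m ≠ 1 := by
  intro h
  rw [zz, Complex.exp_eq_one_iff] at h
  obtain ⟨n, hn⟩ := h
  have harg : ((((20:ℝ) - 2*m) * (Real.pi/9) : ℝ) : ℂ) * Complex.I = (((n:ℝ) * (2 * Real.pi) : ℝ) : ℂ) * Complex.I := by
    push_cast
    linear_combination hn
  have hre : ((20:ℝ) - 2*m) * (Real.pi/9) = (n:ℝ) * (2 * Real.pi) := by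
    have := congrArg Complex.im harg
    simpa using this
  have : ((20:ℝ) - 2*m) = 18 * n := by
    have hpi := Real.pi_ne_zero
    field_simp at hre
    have h18 : ((20:ℝ) - 2*m) * Real.pi = (18 * n) * Real.pi := by rw [hre]; ring
    have := mul_right_cancel₀ hpi h18
    linarith
  have hz : (20 - 2*(m:ℤ)) = 18 * n := by exact_mod_cast this
  omega

lemma geo_sum (m : ℕ) (hm : m < 21) :
    ∑ ℓ ∈ Finset.range 9, zz m ^ ℓ = if m = 1 ∨ m = 10 ∨ m = 19 then 9 else 0 := by
  by_cases h : m = 1 ∨ m = 10 ∨ m = 19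
  · have hz1 : zz m = 1 := by
      rcases h with h | h | h <;> subst h <;> rw [zz]
      · norm_num
        rw [show ((18:ℂ)) * (↑Real.pi/9) * Complex.I = 2 * Real.pi * Complex.I by ring,
          Complex.exp_two_pi_mul_I]
      · norm_num [Complex.exp_zero]
      · rw [show ((20:ℂ) - 2*(19:ℕ)) * (↑Real.pi/9) * Complex.I = ((-1:ℤ):ℂ) * (2 * Real.pi * Complex.I) by push_cast; ring,
          Complex.exp_int_mul_two_pi_mul_I]
    simp [h, hz1]
  · push_neg at h
    rw [if_neg (by tauto)]
    rw [geom_sum_eq (zz_ne_one m hm h.1 h.2.1 h.2.2)]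
    rw [zz_pow9]
    simp

theorem stmt_4 (θ : ℝ) :
    (1 / 9 : ℝ) * ∑ ℓ ∈ Finset.range 9, (Real.sin ((θ + ℓ * Real.pi) / 9)) ^ 20
      = (1 / 4 ^ 10) * ((Nat.choose 20 10 : ℝ) - 2 * (Nat.choose 20 1 : ℝ) * Real.cos (2 * θ)) := by
  have key : ∑ ℓ ∈ Finset.range 9, (Complex.sin (((θ + ℓ * Real.pi) / 9 : ℝ) : ℂ)) ^ 20
      = 9 * ((1 / 4 ^ 10) * ((Nat.choose 20 10 : ℂ) - 2 * (Nat.choose 20 1 : ℂ) * Complex.cos (2 * θ))) := by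
    have step1 : ∀ ℓ ∈ Finset.range 9, (Complex.sin (((θ + ℓ * Real.pi) / 9 : ℝ) : ℂ)) ^ 20
        = (∑ m ∈ Finset.range 21,
            cc m * Complex.exp (((20:ℂ) - 2*m) * (θ/9) * Complex.I) * zz m ^ ℓ) / 4 ^ 10 := by
      intro ℓ _
      rw [sin_pow20]
      congr 1
      apply Finset.sum_congr rfl
      intro m _
      rw [zz, ← Complex.exp_nat_mul, mul_assoc (cc m) _ _, ← Complex.exp_add]
      congr 2
      push_cast
      ring
    rw [Finset.sum_congr rfl step1, ← Finset.sum_div, Finset.sum_comm]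
    have step2 : ∀ m ∈ Finset.range 21,
        ∑ ℓ ∈ Finset.range 9, cc m * Complex.exp (((20:ℂ) - 2*m) * (θ/9) * Complex.I) * zz m ^ ℓ
        = cc m * Complex.exp (((20:ℂ) - 2*m) * (θ/9) * Complex.I)
            * (if m = 1 ∨ m = 10 ∨ m = 19 then (9:ℂ) else 0) := by
      intro m hm
      rw [← Finset.mul_sum, geo_sum m (Finset.mem_range.mp hm)]
    rw [Finset.sum_congr rfl step2]
    have hsub : ({1, 10, 19} : Finset ℕ) ⊆ Finset.range 21 := by decide
    rw [← Finset.sum_subset hsub (by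
      intro m _ hmem
      have : ¬ (m = 1 ∨ m = 10 ∨ m = 19) := by
        simp only [Finset.mem_insert, Finset.mem_singleton] at hmem
        tauto
      rw [if_neg this, mul_zero])]
    rw [show ({1, 10, 19} : Finset ℕ) = insert 1 (insert 10 {19}) from rfl]
    rw [Finset.sum_insert (by decide), Finset.sum_insert (by decide), Finset.sum_singleton]
    simp only [if_pos (by tauto : (1:ℕ) = 1 ∨ (1:ℕ) = 10 ∨ (1:ℕ) = 19),
      if_pos (by tauto : (10:ℕ) = 1 ∨ (10:ℕ) = 10 ∨ (10:ℕ) = 19),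
      if_pos (by tauto : (19:ℕ) = 1 ∨ (19:ℕ) = 10 ∨ (19:ℕ) = 19), cc]
    have e1 : ((20:ℂ) - 2*((1:ℕ):ℂ)) * (↑θ/9) * Complex.I = 2*θ * Complex.I := by push_cast; ring
    have e10 : ((20:ℂ) - 2*((10:ℕ):ℂ)) * (↑θ/9) * Complex.I = 0 := by push_cast; ring
    have e19 : ((20:ℂ) - 2*((19:ℕ):ℂ)) * (↑θ/9) * Complex.I = -(2*θ * Complex.I) := by push_cast; ring
    rw [e1, e10, e19, Complex.exp_zero]
    have hcos := Complex.two_cos (2*θ : ℂ)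
    rw [show (-(2*(θ:ℂ)) * Complex.I) = -(2*↑θ*Complex.I) by ring] at hcos
    norm_num [Nat.choose]
    linear_combination ((45:ℂ)/262144) * hcos
  rw [← Complex.ofReal_inj]
  push_cast at key ⊢
  linear_combination key / 9
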